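/- arXiv:math/0303062 — 2 statements merged into one kernel-verified Lean document; each statement's English description precedes it below -/
import Mathlib

section
/- The category of groups does not satisfy the cube theorem. Concretely: the pushout in the category of groups of Z ← 1 → Z is the free group F on two generators a and b; pulling the pushout square (1 → Z, 1 → Z, with pushout F) back along the inclusion of the infinite cyclic subgroup ⟨ab⟩ ≤ F yields a square whose three initial vertices are trivial groups (since ⟨a⟩ ∩ ⟨ab⟩ = 1 and ⟨b⟩ ∩ ⟨ab⟩ = 1 in F) and whose fourth vertex is ⟨ab⟩ ≅ Z; this square is not a pushout square, because the pushout of 1 ← 1 → 1 is the trivial group while ⟨ab⟩ is infinite cyclic. -/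
/-!
The category of groups does not satisfy the cube theorem
(Chataur–Scherer, Example 1.2).
-/

open CategoryTheory


noncomputable def cnt (i : Fin 2) : FreeGroup (Fin 2) →* Multiplicative ℤ :=
  FreeGroup.lift (fun j => if j = i then Multiplicative.ofAdd (1 : ℤ) else 1)

theorem cnt_eq (i j : Fin 2) :
    cnt i (FreeGroup.of j) = if j = i then Multiplicative.ofAdd (1 : ℤ) else 1 := by
  simp [cnt]

theorem inf_bot (a b : FreeGroup (Fin 2))
    (i : Fin 2) (c : FreeGroup (Fin 2)) (hc : cnt i c = 1)
    (hab : cnt i (a * b) = Multiplicative.ofAdd 1) :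
    Subgroup.zpowers c ⊓ Subgroup.zpowers (a * b) = ⊥ := by
  rw [eq_bot_iff]
  rintro x ⟨⟨m, rfl⟩, ⟨n, hn⟩⟩
  simp only at hn ⊢
  have h1 : cnt i (c ^ m) = 1 := by rw [map_zpow, hc, one_zpow]
  have h2 : cnt i ((a * b) ^ n) = Multiplicative.ofAdd n := by
    rw [map_zpow, hab, ← ofAdd_zsmul, smul_eq_mul, mul_one]
  rw [← hn, h2] at h1
  have hn0 : n = 0 := by simpa using h1
  rw [hn0, zpow_zero] at hn
  simp [← hn, Subgroup.mem_bot]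

section
open Limits Multiplicative

theorem pushout_free (a b : FreeGroup (Fin 2)) (ha : a = FreeGroup.of 0) (hb : b = FreeGroup.of 1) :
    IsPushout
        (GrpCat.ofHom (1 : PUnit →* Multiplicative ℤ))
        (GrpCat.ofHom (1 : PUnit →* Multiplicative ℤ))
        (GrpCat.ofHom ((zpowersHom (FreeGroup (Fin 2))) a))
        (GrpCat.ofHom ((zpowersHom (FreeGroup (Fin 2))) b)) := by
  have eq : (GrpCat.ofHom (1 : PUnit →* Multiplicative ℤ)) ≫ GrpCat.ofHom (zpowersHom (FreeGroup (Fin 2)) a)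
      = (GrpCat.ofHom (1 : PUnit →* Multiplicative ℤ)) ≫ GrpCat.ofHom (zpowersHom (FreeGroup (Fin 2)) b) := by
    ext x
    have hx : x = 1 := rfl
    rw [hx]
    simp
  refine IsPushout.of_isColimit (PushoutCocone.IsColimit.mk eq
    (fun s => GrpCat.ofHom (FreeGroup.lift (fun i => if i = 0 then s.inl (ofAdd (1:ℤ)) else s.inr (ofAdd (1:ℤ)))))
    (fun s => ?_) (fun s => ?_) (fun s m h1 h2 => ?_))
  · refine GrpCat.hom_ext (MonoidHom.ext_mint ?_)
    show FreeGroup.lift _ (a ^ toAdd (ofAdd (1:ℤ))) = _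
    simp [ha]
    rfl
  · refine GrpCat.hom_ext (MonoidHom.ext_mint ?_)
    show FreeGroup.lift _ (b ^ toAdd (ofAdd (1:ℤ))) = _
    simp [hb]
    rfl
  · refine GrpCat.hom_ext (FreeGroup.ext_hom _ _ (fun i => ?_))
    fin_cases i
    · have : FreeGroup.of (0 : Fin 2) = (zpowersHom (FreeGroup (Fin 2)) a) (ofAdd (1:ℤ)) := by
        simp [ha]
      show m (FreeGroup.of 0) = _
      rw [this]
      have h := congrArg (fun f => f.hom (ofAdd (1:ℤ))) h1
      have h' : m ((zpowersHom (FreeGroup (Fin 2)) a) (ofAdd (1:ℤ))) = s.inl (ofAdd (1:ℤ)) := h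
      rw [h']
      exact (by simp : (FreeGroup.lift (fun i => if i = 0 then s.inl (ofAdd (1:ℤ)) else s.inr (ofAdd (1:ℤ)))) (FreeGroup.of 0) = s.inl (ofAdd (1:ℤ))).symm
    · have : FreeGroup.of (1 : Fin 2) = (zpowersHom (FreeGroup (Fin 2)) b) (ofAdd (1:ℤ)) := by
        simp [hb]
      show m (FreeGroup.of 1) = _
      rw [this]
      have h := congrArg (fun f => f.hom (ofAdd (1:ℤ))) h2
      have h' : m ((zpowersHom (FreeGroup (Fin 2)) b) (ofAdd (1:ℤ))) = s.inr (ofAdd (1:ℤ)) := h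
      rw [h']
      exact (by simp : (FreeGroup.lift (fun i => if i = 0 then s.inl (ofAdd (1:ℤ)) else s.inr (ofAdd (1:ℤ)))) (FreeGroup.of 1) = s.inr (ofAdd (1:ℤ))).symm
end

section
open Multiplicative

theorem equiv_z (g : FreeGroup (Fin 2)) (hg : cnt 0 g = ofAdd 1) :
    Nonempty (Subgroup.zpowers g ≃* Multiplicative ℤ) := by
  have hinj : Function.Injective (zpowersHom (Subgroup.zpowers g) ⟨g, Subgroup.mem_zpowers g⟩) := by
    intro x y hxy
    have : g ^ (toAdd x) = g ^ (toAdd y) := congrArg Subtype.val hxy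
    have h2 : cnt 0 (g ^ (toAdd x)) = cnt 0 (g ^ (toAdd y)) := congrArg _ this
    rw [map_zpow, map_zpow, hg, ← ofAdd_zsmul, ← ofAdd_zsmul] at h2
    have h3 : (toAdd x) • (1:ℤ) = (toAdd y) • (1:ℤ) := by
      exact_mod_cast Multiplicative.ofAdd.injective h2
    simpa using Multiplicative.toAdd.injective (by simpa using h3)
  have hsurj : Function.Surjective (zpowersHom (Subgroup.zpowers g) ⟨g, Subgroup.mem_zpowers g⟩) := by
    rintro ⟨x, n, rfl⟩
    exact ⟨ofAdd n, Subtype.ext (by simp)⟩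
  exact ⟨(MulEquiv.ofBijective _ ⟨hinj, hsurj⟩).symm⟩

theorem not_po (g : FreeGroup (Fin 2)) (hg : cnt 0 g = ofAdd 1) :
    ¬ IsPushout (𝟙 (GrpCat.of PUnit)) (𝟙 (GrpCat.of PUnit))
          (GrpCat.ofHom (1 : PUnit →* Subgroup.zpowers g))
          (GrpCat.ofHom (1 : PUnit →* Subgroup.zpowers g)) := by
  intro h
  have key : GrpCat.ofHom ((cnt 0).comp (Subgroup.zpowers g).subtype)
      = GrpCat.ofHom (1 : Subgroup.zpowers g →* Multiplicative ℤ) := by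
    apply h.hom_ext <;>
    · ext x
      have hx : x = 1 := rfl
      rw [hx]
      simp
  have := congrArg (fun f => f.hom ⟨g, Subgroup.mem_zpowers g⟩) key
  simp only [GrpCat.hom_ofHom, MonoidHom.comp_apply, MonoidHom.one_apply] at this
  rw [show (Subgroup.zpowers g).subtype ⟨g, Subgroup.mem_zpowers g⟩ = g from rfl, hg] at this
  exact absurd this (by decide)
end

/-- **Example 1.2.** The category of groups does not satisfy the cube theorem.
Concretely, let `F` be the free group on two generators `a` and `b`.  Then:
* the push-out in the category of groups of `ℤ ⟵ 1 ⟶ ℤ` is `F` (via `n ↦ aⁿ` and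
  `n ↦ bⁿ`);
* pulling this push-out square back along the inclusion of the infinite cyclic
  subgroup `⟨ab⟩ ≤ F` yields a square whose three initial vertices are trivial
  (since `⟨a⟩ ⊓ ⟨ab⟩ = 1` and `⟨b⟩ ⊓ ⟨ab⟩ = 1` in `F`) and whose fourth vertex is
  `⟨ab⟩ ≅ ℤ`;
* this square is not a push-out square, because the push-out of `1 ⟵ 1 ⟶ 1` is the
  trivial group while `⟨ab⟩` is infinite cyclic. -/
theorem category_of_groups_fails_cube_theorem :
    ∀ (F : Type) (_ : F = FreeGroup (Fin 2)),
    ∀ (a b : FreeGroup (Fin 2)), a = FreeGroup.of 0 → b = FreeGroup.of 1 →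
      -- (1) `F = ℤ * ℤ` is the push-out of `ℤ ⟵ 1 ⟶ ℤ` in the category of groups
      (IsPushout
        (GrpCat.ofHom (1 : PUnit →* Multiplicative ℤ))
        (GrpCat.ofHom (1 : PUnit →* Multiplicative ℤ))
        (GrpCat.ofHom ((zpowersHom (FreeGroup (Fin 2))) a))
        (GrpCat.ofHom ((zpowersHom (FreeGroup (Fin 2))) b))) ∧
      -- (2) the pull-backs of `⟨a⟩` and `⟨b⟩` along `⟨ab⟩ ≤ F` are trivial
      Subgroup.zpowers a ⊓ Subgroup.zpowers (a * b) = ⊥ ∧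
      Subgroup.zpowers b ⊓ Subgroup.zpowers (a * b) = ⊥ ∧
      -- and the fourth vertex `⟨ab⟩` is infinite cyclic
      Nonempty (Subgroup.zpowers (a * b) ≃* Multiplicative ℤ) ∧
      -- (3) the pulled-back square, with three trivial vertices and fourth vertex
      -- `⟨ab⟩`, is not a push-out square
      ¬ IsPushout (𝟙 (GrpCat.of PUnit)) (𝟙 (GrpCat.of PUnit))
          (GrpCat.ofHom (1 : PUnit →* Subgroup.zpowers (a * b)))
          (GrpCat.ofHom (1 : PUnit →* Subgroup.zpowers (a * b))) := by
  intro F hF a b ha hb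
  have hca : cnt 1 a = 1 := by rw [ha, cnt_eq]; decide
  have hcb : cnt 0 b = 1 := by rw [hb, cnt_eq]; decide
  have hab1 : cnt 1 (a * b) = Multiplicative.ofAdd 1 := by
    rw [map_mul, hca, one_mul, hb, cnt_eq]; decide
  have hab0 : cnt 0 (a * b) = Multiplicative.ofAdd 1 := by
    rw [map_mul, hcb, mul_one, ha, cnt_eq]; decide
  have hba : Subgroup.zpowers b ⊓ Subgroup.zpowers (a * b) = ⊥ :=
    inf_bot a b 0 b hcb hab0
  exact ⟨pushout_free a b ha hb, inf_bot a b 1 a hca hab1, hba,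
    equiv_z (a * b) hab0, not_po (a * b) hab0⟩
end

section
/- For any groups A and B, the pushout in the category of groups of the two product projections p₁ : A × B → A and p₂ : A × B → B is the trivial group. Hence the join of any two groups, computed as this pushout, is trivial, and the category of groups satisfies the join axiom. -/
/-!
The join of any two groups is trivial: the push-out of the two product projections
`A ⟵ A × B ⟶ B` in the category of groups is the trivial group, so the category of
groups satisfies the join axiom (Chataur–Scherer, Example 2.5).
-/

open CategoryTheory

/-- **Example 2.5.** For any groups `A` and `B`, the push-out in the category of groups
of the two product projections `p₁ : A × B ⟶ A` and `p₂ : A × B ⟶ B` is the trivial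
group.  Hence the join of any two groups, computed as this push-out, is trivial, and
the category of groups satisfies the join axiom. -/
theorem pushout_of_projections_trivial (A B : Type) [Group A] [Group B] :
    IsPushout
      (GrpCat.ofHom (MonoidHom.fst A B))
      (GrpCat.ofHom (MonoidHom.snd A B))
      (GrpCat.ofHom (1 : A →* PUnit))
      (GrpCat.ofHom (1 : B →* PUnit)) := by
  have sq : CommSq (GrpCat.ofHom (MonoidHom.fst A B)) (GrpCat.ofHom (MonoidHom.snd A B))
      (GrpCat.ofHom (1 : A →* PUnit)) (GrpCat.ofHom (1 : B →* PUnit)) := ⟨rfl⟩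
  apply IsPushout.of_isColimit' sq
  refine Limits.PushoutCocone.IsColimit.mk sq.w (fun s => GrpCat.ofHom 1) ?_ ?_ ?_
  · intro s
    ext a
    show (1 : s.pt) = s.inl a
    have h1 : s.inl a = (GrpCat.ofHom (MonoidHom.fst A B) ≫ s.inl) (a, 1) := rfl
    have h2 : (GrpCat.ofHom (MonoidHom.fst A B) ≫ s.inl) (a, 1)
        = (GrpCat.ofHom (MonoidHom.snd A B) ≫ s.inr) (a, 1) := by
      rw [s.condition]
    have h3 : (GrpCat.ofHom (MonoidHom.snd A B) ≫ s.inr) (a, 1) = s.inr 1 := rfl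
    rw [h1, h2, h3, map_one]
  · intro s
    ext b
    show (1 : s.pt) = s.inr b
    have h1 : s.inr b = (GrpCat.ofHom (MonoidHom.snd A B) ≫ s.inr) (1, b) := rfl
    have h2 : (GrpCat.ofHom (MonoidHom.snd A B) ≫ s.inr) (1, b)
        = (GrpCat.ofHom (MonoidHom.fst A B) ≫ s.inl) (1, b) := by
      rw [s.condition]
    have h3 : (GrpCat.ofHom (MonoidHom.fst A B) ≫ s.inl) (1, b) = s.inl 1 := rfl
    rw [h1, h2, h3, map_one]
  · intro s m _ _
    ext ⟨⟩
    show m 1 = (1 : s.pt)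
    rw [map_one]
end
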